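/- Let $b,\tau>0$, and for $n\ge 0$ let $\omega_n$ be the unique solution of $\omega\cot(\omega\tau)=-b$ in $\big((n+\tfrac12)\frac{\pi}{\tau},(n+1)\frac{\pi}{\tau}\big)$, $\lambda_n=\frac{1}{b^2+\omega_n^2}$, and $f_n(t)=\sqrt{\frac{2}{\tau+b\lambda_n}}\sin(\omega_n t)$. Let $K(s,t)=\frac{1}{2b}e^{-b|t-s|}-\frac{1}{2b}e^{-b(t+s)}$. Then for every $s\in[0,\tau]$, $\int_0^\tau K(s,t)f_n(t)\,dt=\lambda_n f_n(s)$, i.e. $f_n$ is an eigenfunction of the integral operator with kernel $K$ with eigenvalue $\lambda_n$, and $\int_0^\tau f_n(t)^2\,dt=1$. -/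

import Mathlib

open Real MeasureTheory

lemma exp_mul_sin_hasDerivAt (a w t : ℝ) :
    HasDerivAt (fun x => Real.exp (a*x) * (a * Real.sin (w*x) - w * Real.cos (w*x)))
      ((a^2 + w^2) * (Real.exp (a*t) * Real.sin (w*t))) t := by
  have h1 : HasDerivAt (fun x : ℝ => Real.exp (a*x)) (Real.exp (a*t) * a) t := by
    simpa using (((hasDerivAt_id t).const_mul a).exp)
  have h2 : HasDerivAt (fun x : ℝ => Real.sin (w*x)) (Real.cos (w*t) * w) t := by
    simpa using (((hasDerivAt_id t).const_mul w).sin)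
  have h3 : HasDerivAt (fun x : ℝ => Real.cos (w*x)) (-Real.sin (w*t) * w) t := by
    simpa using (((hasDerivAt_id t).const_mul w).cos)
  have := h1.mul ((h2.const_mul a).sub (h3.const_mul w))
  exact this.congr_deriv (by simp only [Pi.sub_apply]; ring)

lemma integral_exp_mul_sin (a w : ℝ) (hw : a^2 + w^2 ≠ 0) (u v : ℝ) :
    ∫ t in u..v, Real.exp (a*t) * Real.sin (w*t)
      = (Real.exp (a*v) * (a * Real.sin (w*v) - w * Real.cos (w*v))
         - Real.exp (a*u) * (a * Real.sin (w*u) - w * Real.cos (w*u))) / (a^2+w^2) := by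
  rw [eq_div_iff hw]
  have key : ∀ t ∈ Set.uIcc u v,
      HasDerivAt (fun x => Real.exp (a*x) * (a * Real.sin (w*x) - w * Real.cos (w*x)))
        ((a^2 + w^2) * (Real.exp (a*t) * Real.sin (w*t))) t :=
    fun t _ => exp_mul_sin_hasDerivAt a w t
  have hint : IntervalIntegrable (fun t => (a^2+w^2) * (Real.exp (a*t) * Real.sin (w*t)))
      volume u v := by
    apply Continuous.intervalIntegrable; fun_prop
  have := intervalIntegral.integral_eq_sub_of_hasDerivAt key hint
  rw [intervalIntegral.integral_const_mul] at this
  linarith [this]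


/-- Karhunen–Loève eigenfunctions of the OU covariance kernel on `[0,τ]`: with `ω_n` the
unique root of `ω cot(ωτ) = -b` in `((n+1/2)π/τ, (n+1)π/τ)`, `λ_n = 1/(b² + ω_n²)` and
`f_n(t) = √(2/(τ + bλ_n)) sin(ω_n t)`, the function `f_n` is a normalized eigenfunction of
the integral operator with kernel `K(s,t) = (1/(2b))e^{-b|t-s|} - (1/(2b))e^{-b(t+s)}`
with eigenvalue `λ_n`. -/
theorem ou_KL_eigenfunction (b τ : ℝ) (hb : 0 < b) (hτ : 0 < τ) (n : ℕ) (ω : ℝ)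
    (hω : ω ∈ Set.Ioo (((n : ℝ) + 1 / 2) * π / τ) (((n : ℝ) + 1) * π / τ))
    (hroot : ω * (Real.cos (ω * τ) / Real.sin (ω * τ)) = -b)
    (lam : ℝ) (hlam : lam = 1 / (b ^ 2 + ω ^ 2))
    (f : ℝ → ℝ) (hf : ∀ t, f t = Real.sqrt (2 / (τ + b * lam)) * Real.sin (ω * t))
    (K : ℝ → ℝ → ℝ)
    (hK : ∀ s t, K s t = 1 / (2 * b) * Real.exp (-b * |t - s|)
        - 1 / (2 * b) * Real.exp (-b * (t + s))) :
    (∀ s ∈ Set.Icc (0:ℝ) τ, (∫ t in (0:ℝ)..τ, K s t * f t) = lam * f s) ∧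
    (∫ t in (0:ℝ)..τ, f t ^ 2) = 1 := by
  have hπ := Real.pi_pos
  have hω0 : 0 < ω := lt_trans (by positivity) hω.1
  have hωτ1 : ((n:ℝ) + 1/2) * π < ω * τ := by
    have := (div_lt_iff₀ hτ).mp hω.1; linarith
  have hωτ2 : ω * τ < ((n:ℝ)+1) * π := by
    have := (lt_div_iff₀ hτ).mp hω.2; linarith
  have hsin : Real.sin (ω*τ) ≠ 0 := by
    intro h
    rw [Real.sin_eq_zero_iff] at h
    obtain ⟨m, hm⟩ := h
    have h1 : ((n:ℝ) + 1/2) < (m:ℝ) := by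
      have := hωτ1; rw [← hm] at this; exact (mul_lt_mul_iff_left₀ hπ).mp this
    have h2 : (m:ℝ) < (n:ℝ) + 1 := by
      have := hωτ2; rw [← hm] at this; exact (mul_lt_mul_iff_left₀ hπ).mp this
    have hm1 : (n:ℤ) < m := by exact_mod_cast (by push_cast; linarith : ((n:ℤ):ℝ) < (m:ℝ))
    have hm2 : m < (n:ℤ) + 1 := by exact_mod_cast (by push_cast; linarith : ((m:ℤ):ℝ) < ((n:ℤ):ℝ) + 1)
    omega
  have E : b * Real.sin (ω*τ) + ω * Real.cos (ω*τ) = 0 := by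
    field_simp at hroot; linarith
  have hD : (0:ℝ) < b^2 + ω^2 := by positivity
  have hDb : b^2 + ω^2 ≠ 0 := ne_of_gt hD
  have hDnb : (-b)^2 + ω^2 ≠ 0 := by
    rw [show ((-b:ℝ))^2 = b^2 from by ring]; exact hDb
  have hsc : Real.sin (ω*τ)^2 * (b^2+ω^2) = ω^2 := by
    have h := Real.sin_sq_add_cos_sq (ω*τ)
    have hc2 : (ω * Real.cos (ω*τ))^2 = (b * Real.sin (ω*τ))^2 := by
      have hc : ω * Real.cos (ω*τ) = -(b * Real.sin (ω*τ)) := by linarith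
      rw [hc]; ring
    nlinarith [h, hc2]
  subst hlam
  have hlam0 : 0 < 1 / (b^2 + ω^2) := by positivity
  have hden : 0 < τ + b * (1 / (b^2 + ω^2)) := by
    have : 0 < b * (1 / (b^2 + ω^2)) := by positivity
    linarith
  set c : ℝ := Real.sqrt (2 / (τ + b * (1 / (b^2 + ω^2)))) with hc
  have hc2 : c^2 = 2/(τ + b * (1 / (b^2 + ω^2))) := Real.sq_sqrt (by positivity)
  have hcont : ∀ s : ℝ, Continuous fun t => K s t * f t := by
    intro s
    have : (fun t => K s t * f t) = fun t =>
        (1/(2*b) * Real.exp (-b * |t - s|) - 1/(2*b) * Real.exp (-b*(t+s)))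
          * (c * Real.sin (ω*t)) := by
      funext t; rw [hK, hf]
    rw [this]; fun_prop
  have hE' : Real.cos (ω*τ) = -(b * Real.sin (ω*τ)) / ω := by
    field_simp; linarith
  constructor
  · intro s hs
    obtain ⟨hs0, hsτ⟩ := hs
    have hsplit : (∫ t in (0:ℝ)..τ, K s t * f t)
        = (∫ t in (0:ℝ)..s, K s t * f t) + ∫ t in s..τ, K s t * f t :=
      (intervalIntegral.integral_add_adjacent_intervals
        ((hcont s).intervalIntegrable _ _) ((hcont s).intervalIntegrable _ _)).symm
    have hp1 : (∫ t in (0:ℝ)..s, K s t * f t)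
        = c/(2*b) * Real.exp (-(b*s)) *
          ((∫ t in (0:ℝ)..s, Real.exp (b*t) * Real.sin (ω*t))
            - ∫ t in (0:ℝ)..s, Real.exp (-b*t) * Real.sin (ω*t)) := by
      rw [← intervalIntegral.integral_sub
        ((by fun_prop : Continuous fun t => Real.exp (b*t) * Real.sin (ω*t)).intervalIntegrable _ _)
        ((by fun_prop : Continuous fun t => Real.exp (-b*t) * Real.sin (ω*t)).intervalIntegrable _ _),
        ← intervalIntegral.integral_const_mul]
      apply intervalIntegral.integral_congr
      intro t ht
      rw [Set.uIcc_of_le hs0] at ht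
      show K s t * f t = _
      rw [hK, hf, abs_of_nonpos (by linarith [ht.2] : t - s ≤ 0)]
      have e1 : Real.exp (-b * -(t-s)) = Real.exp (-(b*s)) * Real.exp (b*t) := by
        rw [← Real.exp_add]; congr 1; ring
      have e2 : Real.exp (-b*(t+s)) = Real.exp (-(b*s)) * Real.exp (-b*t) := by
        rw [← Real.exp_add]; congr 1; ring
      rw [e1, e2]; ring
    have hp2 : (∫ t in s..τ, K s t * f t)
        = c/(2*b) * (Real.exp (b*s) - Real.exp (-(b*s))) *
          ∫ t in s..τ, Real.exp (-b*t) * Real.sin (ω*t) := by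
      rw [← intervalIntegral.integral_const_mul]
      apply intervalIntegral.integral_congr
      intro t ht
      rw [Set.uIcc_of_le hsτ] at ht
      show K s t * f t = _
      rw [hK, hf, abs_of_nonneg (by linarith [ht.1] : 0 ≤ t - s)]
      have e1 : Real.exp (-b * (t-s)) = Real.exp (b*s) * Real.exp (-b*t) := by
        rw [← Real.exp_add]; congr 1; ring
      have e2 : Real.exp (-b*(t+s)) = Real.exp (-(b*s)) * Real.exp (-b*t) := by
        rw [← Real.exp_add]; congr 1; ring
      rw [e1, e2]; ring
    rw [hsplit, hp1, hp2, integral_exp_mul_sin b ω hDb,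
      integral_exp_mul_sin (-b) ω hDnb, integral_exp_mul_sin (-b) ω hDnb]
    rw [hf, hE']
    have hXne : Real.exp (b*s) ≠ 0 := (Real.exp_pos _).ne'
    simp only [mul_zero, Real.sin_zero, Real.cos_zero, Real.exp_zero,
      show ((-b:ℝ))^2 = b^2 from by ring]
    rw [show Real.exp (-b*s) = (Real.exp (b*s))⁻¹ from by rw [← Real.exp_neg]; ring_nf,
        show Real.exp (-(b*s)) = (Real.exp (b*s))⁻¹ from Real.exp_neg _]
    set X := Real.exp (b*s) with hXdef
    field_simp
    ring
  · have key : ∀ t ∈ Set.uIcc (0:ℝ) τ,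
        HasDerivAt (fun x => c^2 * (x/2 - Real.sin (ω*x) * Real.cos (ω*x) / (2*ω)))
          (f t ^ 2) t := by
      intro t _
      have h2 : HasDerivAt (fun x : ℝ => Real.sin (ω*x)) (Real.cos (ω*t) * ω) t := by
        simpa using (((hasDerivAt_id t).const_mul ω).sin)
      have h3 : HasDerivAt (fun x : ℝ => Real.cos (ω*x)) (-Real.sin (ω*t) * ω) t := by
        simpa using (((hasDerivAt_id t).const_mul ω).cos)
      have h4 := (((hasDerivAt_id t).div_const 2).sub
        (((h2.mul h3).div_const (2*ω)))).const_mul (c^2)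
      refine h4.congr_deriv ?_
      rw [hf]
      have hpyth := Real.sin_sq_add_cos_sq (ω*t)
      field_simp
      linear_combination -(c^2) * hpyth
    have hint : IntervalIntegrable (fun t => f t ^ 2) volume 0 τ := by
      have : (fun t => f t ^ 2) = fun t => (c * Real.sin (ω*t))^2 := by
        funext t; rw [hf]
      rw [this]; apply Continuous.intervalIntegrable; fun_prop
    rw [intervalIntegral.integral_eq_sub_of_hasDerivAt key hint]
    have h1 : ω * (Real.sin (ω*τ) * Real.cos (ω*τ) * (b^2+ω^2)) = ω * (-(b*ω)) := by
      linear_combination (b^2+ω^2) * Real.sin (ω*τ) * E - b * hsc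
    have hsincos : Real.sin (ω*τ) * Real.cos (ω*τ) = -(b*ω)/(b^2+ω^2) :=
      (eq_div_iff hDb).mpr (mul_left_cancel₀ (ne_of_gt hω0) h1)
    rw [hsincos, hc2]
    simp only [mul_zero, Real.sin_zero, Real.cos_zero]
    field_simp
    ring
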